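/- The reduction relation →βΣ, the union of β-reduction with the rewrite rule [α:type, β:type] term(arrow α β) ⇝ term α → term β of the HOL signature Σ in the λΠ-calculus modulo rewriting, is confluent. -/

import Mathlib

set_option autoImplicit false

namespace HolDk

/-! ### Dedukti: the λΠ-calculus modulo rewriting, with de Bruijn indices.

Terms `M, N, A, B ::= x | c | Type | Kind | Πx:A.B | λx:A.M | M N`. -/

inductive DTm : Type
  | var   : ℕ → DTm
  | const : ℕ → DTm
  | type  : DTm
  | kind  : DTm
  | pi    : DTm → DTm → DTm
  | lam   : DTm → DTm → DTm
  | app   : DTm → DTm → DTm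
  deriving DecidableEq

namespace DTm

/-- Shift the free de Bruijn indices `≥ c` up by `d`. -/
def shift (d : ℕ) : ℕ → DTm → DTm
  | c, var n => if n < c then var n else var (n + d)
  | _, const k => const k
  | _, type => type
  | _, kind => kind
  | c, pi A B => pi (shift d c A) (shift d (c+1) B)
  | c, lam A M => lam (shift d c A) (shift d (c+1) M)
  | c, app M N => app (shift d c M) (shift d c N)

/-- Lift a simultaneous substitution under one binder. -/
def liftSub (σ : ℕ → DTm) : ℕ → DTm
  | 0 => var 0
  | n+1 => shift 1 0 (σ n)

/-- Simultaneous substitution. -/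
def subst (σ : ℕ → DTm) : DTm → DTm
  | var n => σ n
  | const k => const k
  | type => type
  | kind => kind
  | pi A B => pi (subst σ A) (subst (liftSub σ) B)
  | lam A M => lam (subst σ A) (subst (liftSub σ) M)
  | app M N => app (subst σ M) (subst σ N)

/-- Substitution `[N/x]M` of `N` for the de Bruijn index `0` in `M`. -/
def subst0 (M N : DTm) : DTm :=
  subst (fun n => match n with | 0 => N | n+1 => var n) M

/-- Non-dependent product `A → B`. -/
def arr (A B : DTm) : DTm := pi A (shift 1 0 B)

end DTm

/-- Signatures `Σ ::= · | Σ, c : A | Σ, [Γ] M ⇝ N`. -/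
inductive Sig : Type
  | empty : Sig
  | pushConst : Sig → ℕ → DTm → Sig
  | pushRule : Sig → List DTm → DTm → DTm → Sig

/-- Lookup of the type of a constant in a signature. -/
def Sig.constType : Sig → ℕ → Option DTm
  | .empty, _ => none
  | .pushConst S c A, d => if d = c then some A else S.constType d
  | .pushRule S _ _ _, d => S.constType d

/-- Membership of a rewrite rule `[Γ] M ⇝ N` in a signature. -/
def Sig.hasRule : Sig → List DTm → DTm → DTm → Prop
  | .empty, _, _, _ => False
  | .pushConst S _ _, G, M, N => S.hasRule G M N
  | .pushRule S G' M' N', G, M, N => (G = G' ∧ M = M' ∧ N = N') ∨ S.hasRule G M N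

/-- Pure β-reduction (one step, contextual closure). -/
inductive RedBeta : DTm → DTm → Prop
  | beta (A M N) : RedBeta (.app (.lam A M) N) (M.subst0 N)
  | appL {M M'} (N) : RedBeta M M' → RedBeta (.app M N) (.app M' N)
  | appR (M) {N N'} : RedBeta N N' → RedBeta (.app M N) (.app M N')
  | lamTy {A A'} (M) : RedBeta A A' → RedBeta (.lam A M) (.lam A' M)
  | lamBody (A) {M M'} : RedBeta M M' → RedBeta (.lam A M) (.lam A M')
  | piL {A A'} (B) : RedBeta A A' → RedBeta (.pi A B) (.pi A' B)
  | piR (A) {B B'} : RedBeta B B' → RedBeta (.pi A B) (.pi A B')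

/-- The reduction relation `→βΣ`: β-reduction together with the rewrite rules of
the signature (one step, contextual closure). -/
inductive Red (S : Sig) : DTm → DTm → Prop
  | beta (A M N) : Red S (.app (.lam A M) N) (M.subst0 N)
  | rew {G L R} (σ : ℕ → DTm) : S.hasRule G L R → Red S (L.subst σ) (R.subst σ)
  | appL {M M'} (N) : Red S M M' → Red S (.app M N) (.app M' N)
  | appR (M) {N N'} : Red S N N' → Red S (.app M N) (.app M N')
  | lamTy {A A'} (M) : Red S A A' → Red S (.lam A M) (.lam A' M)
  | lamBody (A) {M M'} : Red S M M' → Red S (.lam A M) (.lam A M')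
  | piL {A A'} (B) : Red S A A' → Red S (.pi A B) (.pi A' B)
  | piR (A) {B B'} : Red S B B' → Red S (.pi A B) (.pi A B')

/-- The conversion `≡βΣ`: reflexive symmetric transitive closure of `→βΣ`. -/
def Conv (S : Sig) : DTm → DTm → Prop := Relation.EqvGen (Red S)

mutual
/-- Signature formation `Σ signature`. -/
inductive SigWf : Sig → Prop
  | empty : SigWf .empty
  | pushConst {S : Sig} {c : ℕ} {A s : DTm} : SigWf S → Typed S [] A s →
      (s = DTm.type ∨ s = DTm.kind) → S.constType c = none →
      SigWf (S.pushConst c A)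
  | pushRule {S : Sig} {G : List DTm} {M N A : DTm} : SigWf S →
      Typed S G M A → Typed S G N A → SigWf (S.pushRule G M N)

/-- Context formation `Σ | Γ context` (contexts are lists, head = most recent binding). -/
inductive CtxWf : Sig → List DTm → Prop
  | nil {S : Sig} : SigWf S → CtxWf S []
  | cons {S : Sig} {G : List DTm} {A : DTm} : CtxWf S G → Typed S G A DTm.type →
      CtxWf S (A :: G)

/-- The typing judgment `Σ | Γ ⊢ M : A` of the λΠ-calculus modulo rewriting. -/
inductive Typed : Sig → List DTm → DTm → DTm → Prop
  | var {S : Sig} {G : List DTm} {n : ℕ} {A : DTm} : CtxWf S G → G[n]? = some A →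
      Typed S G (.var n) (A.shift (n+1) 0)
  | const {S : Sig} {G : List DTm} {c : ℕ} {A : DTm} : CtxWf S G →
      S.constType c = some A → Typed S G (.const c) A
  | type {S : Sig} {G : List DTm} : CtxWf S G → Typed S G .type .kind
  | prod {S : Sig} {G : List DTm} {A B s : DTm} : Typed S G A .type →
      Typed S (A :: G) B s → (s = DTm.type ∨ s = DTm.kind) → Typed S G (.pi A B) s
  | abs {S : Sig} {G : List DTm} {A M B : DTm} : Typed S G A .type →
      Typed S (A :: G) M B → Typed S G (.lam A M) (.pi A B)
  | app {S : Sig} {G : List DTm} {M N A B : DTm} : Typed S G M (.pi A B) →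
      Typed S G N A → Typed S G (.app M N) (B.subst0 N)
  | conv {S : Sig} {G : List DTm} {M A B : DTm} : Typed S G M A →
      Typed S G B DTm.type → Conv S A B → Typed S G M B
end

/-! ### HOL -/

/-- HOL types: type variables, `bool`, `ind`, and arrow types. -/
inductive HTy : Type
  | tvar : ℕ → HTy
  | bool : HTy
  | ind  : HTy
  | arr  : HTy → HTy → HTy
  deriving DecidableEq

/-- HOL terms (simply typed λ-terms, de Bruijn indices for term variables),
with the polymorphic constants `(=_A)` and `select_A`. -/
inductive HTm : Type
  | var    : ℕ → HTm
  | lam    : HTy → HTm → HTm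
  | app    : HTm → HTm → HTm
  | eq     : HTy → HTm
  | select : HTy → HTm
  deriving DecidableEq

/-- The HOL proposition `M = N` (at type `A`), i.e. `(=_A) M N`. -/
def HTm.heq (A : HTy) (M N : HTm) : HTm := .app (.app (.eq A) M) N

/-- HOL typing: `Δ ⊢ M : A` where `Δ` types the term variables. -/
inductive HTyped : List HTy → HTm → HTy → Prop
  | var {D : List HTy} {n : ℕ} {A : HTy} : D[n]? = some A → HTyped D (.var n) A
  | lam {D : List HTy} {A B : HTy} {M : HTm} : HTyped (A :: D) M B →
      HTyped D (.lam A M) (A.arr B)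
  | app {D : List HTy} {A B : HTy} {M N : HTm} : HTyped D M (A.arr B) →
      HTyped D N A → HTyped D (.app M N) B
  | eq {D : List HTy} {A : HTy} : HTyped D (.eq A) (A.arr (A.arr .bool))
  | select {D : List HTy} {A : HTy} : HTyped D (.select A) ((A.arr .bool).arr A)

namespace HTm

/-- Shift the free term-variable indices `≥ c` up by `d`. -/
def shift (d : ℕ) : ℕ → HTm → HTm
  | c, var n => if n < c then var n else var (n + d)
  | c, lam A M => lam A (shift d (c+1) M)
  | c, app M N => app (shift d c M) (shift d c N)
  | _, eq A => eq A
  | _, select A => select A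

def liftSub (σ : ℕ → HTm) : ℕ → HTm
  | 0 => var 0
  | n+1 => shift 1 0 (σ n)

/-- Simultaneous capture-avoiding substitution of term variables. -/
def substF (σ : ℕ → HTm) : HTm → HTm
  | var n => σ n
  | lam A M => lam A (substF (liftSub σ) M)
  | app M N => app (substF σ M) (substF σ N)
  | eq A => eq A
  | select A => select A

/-- Substitution `[N/x]M` for the de Bruijn index `0`. -/
def subst0 (M N : HTm) : HTm :=
  substF (fun n => match n with | 0 => N | n+1 => var n) M

/-- Simultaneous (parallel) substitution `M[M₁/x₁, …, Mₙ/xₙ]` given by a list. -/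
def substL (σ : List HTm) (M : HTm) : HTm :=
  substF (fun n => (σ[n]?).getD (var n)) M

end HTm

/-- Type substitution `A[A₁/α₁, …, Aₘ/αₘ]` on HOL types. -/
def HTy.tsub (θ : List HTy) : HTy → HTy
  | .tvar n => (θ[n]?).getD (.tvar n)
  | .bool => .bool
  | .ind => .ind
  | .arr A B => .arr (A.tsub θ) (B.tsub θ)

/-- Type substitution on HOL terms. -/
def HTm.tsub (θ : List HTy) : HTm → HTm
  | .var n => .var n
  | .lam A M => .lam (A.tsub θ) (M.tsub θ)
  | .app M N => .app (M.tsub θ) (N.tsub θ)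
  | .eq A => .eq (A.tsub θ)
  | .select A => .select (A.tsub θ)

/-- All free type variables of a HOL type are `< n`. -/
def HTy.tvLt (n : ℕ) : HTy → Prop
  | .tvar j => j < n
  | .bool => True
  | .ind => True
  | .arr A B => A.tvLt n ∧ B.tvLt n

/-- All free type variables of a HOL term are `< n`. -/
def HTm.tvLt (n : ℕ) : HTm → Prop
  | .var _ => True
  | .lam A M => A.tvLt n ∧ M.tvLt n
  | .app M N => M.tvLt n ∧ N.tvLt n
  | .eq A => A.tvLt n
  | .select A => A.tvLt n

/-- One-step β-reduction of HOL terms (contextual closure). -/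
inductive HBeta : HTm → HTm → Prop
  | beta (A : HTy) (M N : HTm) : HBeta (.app (.lam A M) N) (M.subst0 N)
  | appL {M M'} (N) : HBeta M M' → HBeta (.app M N) (.app M' N)
  | appR (M) {N N'} : HBeta N N' → HBeta (.app M N) (.app M N')
  | lamBody (A) {M M'} : HBeta M M' → HBeta (.lam A M) (.lam A M')

/-- HOL derivations `Γ ⊢ φ` (Fig. 2), in an ambient term-variable context `Δ`,
with hypotheses `Γ` a finite set of propositions.  The `Subst` rule is split
into a type-substitution rule and a term-substitution rule. -/
inductive HDeriv : List HTy → Finset HTm → HTm → Type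
  | refl {D : List HTy} (A : HTy) (M : HTm) :
      HTyped D M A → HDeriv D ∅ (HTm.heq A M M)
  | absThm {D : List HTy} {G : Finset HTm} (A B : HTy) (M N : HTm) :
      HDeriv (A :: D) (G.image (HTm.shift 1 0)) (HTm.heq B M N) →
      HDeriv D G (HTm.heq (A.arr B) (.lam A M) (.lam A N))
  | appThm {D : List HTy} {G G' : Finset HTm} (A B : HTy) (F Gt M N : HTm) :
      HDeriv D G (HTm.heq (A.arr B) F Gt) → HDeriv D G' (HTm.heq A M N) →
      HDeriv D (G ∪ G') (HTm.heq B (F.app M) (Gt.app N))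
  | beta {D : List HTy} (A B : HTy) (M : HTm) :
      HTyped (A :: D) M B →
      HDeriv (A :: D) ∅ (HTm.heq B (.app (.lam A (M.shift 1 1)) (.var 0)) M)
  | assume {D : List HTy} (φ : HTm) : HTyped D φ .bool → HDeriv D {φ} φ
  | eqMp {D : List HTy} {G G' : Finset HTm} (φ ψ : HTm) :
      HDeriv D G (HTm.heq .bool φ ψ) → HDeriv D G' φ →
      HDeriv D (G ∪ G') ψ
  | deductAntiSym {D : List HTy} {G G' : Finset HTm} (φ ψ : HTm) :
      HDeriv D G φ → HDeriv D G' ψ →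
      HDeriv D (G.erase ψ ∪ G'.erase φ) (HTm.heq .bool φ ψ)
  | typeSubst {D : List HTy} {G : Finset HTm} {φ : HTm} (θ : List HTy) :
      HDeriv D G φ →
      HDeriv (D.map (HTy.tsub θ)) (G.image (HTm.tsub θ)) (φ.tsub θ)
  | termSubst {D : List HTy} {G : Finset HTm} {φ : HTm} {D' : List HTy} (σ : List HTm) :
      σ.length = D.length →
      (∀ (i : ℕ) (A : HTy), D[i]? = some A → ∃ t, σ[i]? = some t ∧ HTyped D' t A) →
      HDeriv D G φ →
      HDeriv D' (G.image (HTm.substL σ)) (HTm.substL σ φ)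

/-! ### The Dedukti signature Σ for HOL -/

def cTy : DTm := .const 0
def dBool : DTm := .const 1
def dInd : DTm := .const 2
def tArr (a b : DTm) : DTm := .app (.app (.const 3) a) b
def tTerm (a : DTm) : DTm := .app (.const 4) a
def tEq (a x y : DTm) : DTm := .app (.app (.app (.const 5) a) x) y
def tProof (p : DTm) : DTm := .app (.const 7) p
def dRefl : DTm := .const 8
def dFunExt : DTm := .const 9
def dAppThm : DTm := .const 10
def dPropExt : DTm := .const 11
def dEqMp : DTm := .const 12
def dImp : DTm := .const 13
def dForall : DTm := .const 14

def tyArrow : DTm := DTm.arr cTy (DTm.arr cTy cTy)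
def tyTerm : DTm := DTm.arr cTy .type
def tyEq : DTm := .pi cTy (tTerm (tArr (.var 0) (tArr (.var 0) dBool)))
def tySelect : DTm := .pi cTy (tTerm (tArr (tArr (.var 0) dBool) (.var 0)))
def tyProof : DTm := DTm.arr (tTerm dBool) .type
def tyRefl : DTm :=
  .pi cTy (.pi (tTerm (.var 0)) (tProof (tEq (.var 1) (.var 0) (.var 0))))
def tyFunExt : DTm :=
  .pi cTy (.pi cTy (.pi (tTerm (tArr (.var 1) (.var 0))) (.pi (tTerm (tArr (.var 2) (.var 1)))
    (DTm.arr
      (.pi (tTerm (.var 3))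
        (tProof (tEq (.var 3) (.app (.var 2) (.var 0)) (.app (.var 1) (.var 0)))))
      (tProof (tEq (tArr (.var 3) (.var 2)) (.var 1) (.var 0)))))))
def tyAppThm : DTm :=
  .pi cTy (.pi cTy (.pi (tTerm (tArr (.var 1) (.var 0))) (.pi (tTerm (tArr (.var 2) (.var 1)))
    (.pi (tTerm (.var 3)) (.pi (tTerm (.var 4))
      (DTm.arr (tProof (tEq (tArr (.var 5) (.var 4)) (.var 3) (.var 2)))
        (DTm.arr (tProof (tEq (.var 5) (.var 1) (.var 0)))
          (tProof (tEq (.var 4) (.app (.var 3) (.var 1)) (.app (.var 2) (.var 0)))))))))))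
def tyPropExt : DTm :=
  .pi (tTerm dBool) (.pi (tTerm dBool)
    (DTm.arr (DTm.arr (tProof (.var 0)) (tProof (.var 1)))
      (DTm.arr (DTm.arr (tProof (.var 0)) (tProof (.var 1)))
        (tProof (tEq dBool (.var 1) (.var 0))))))
def tyEqMp : DTm :=
  .pi (tTerm dBool) (.pi (tTerm dBool)
    (DTm.arr (tProof (tEq dBool (.var 1) (.var 0)))
      (DTm.arr (tProof (.var 1)) (tProof (.var 0)))))

/-- The rewrite rule `[α : type, β : type] term (arrow α β) ⇝ term α → term β`
(in the context list, the head is the most recent variable `β`). -/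
def arrowRuleCtx : List DTm := [cTy, cTy]
def arrowRuleL : DTm := tTerm (tArr (.var 1) (.var 0))
def arrowRuleR : DTm := DTm.arr (tTerm (.var 1)) (tTerm (.var 0))

def baseSig : Sig :=
  ((((Sig.empty.pushConst 0 .type).pushConst 1 cTy).pushConst 2 cTy).pushConst 3
    tyArrow).pushConst 4 tyTerm

/-- The HOL signature Σ:
`type : Type`, `bool ind : type`, `arrow : type → type → type`, `term : type → Type`,
`eq`, `select`, the rewrite rule `term (arrow α β) ⇝ term α → term β`,
`proof : term bool → Type`, and `Refl`, `FunExt`, `AppThm`, `PropExt`, `EqMp`. -/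
def holSig : Sig :=
  ((((((((baseSig.pushConst 5 tyEq).pushConst 6 tySelect).pushRule arrowRuleCtx
    arrowRuleL arrowRuleR).pushConst 7 tyProof).pushConst 8 tyRefl).pushConst 9
    tyFunExt).pushConst 10 tyAppThm).pushConst 11 tyPropExt).pushConst 12 tyEqMp

/-! ### The translation -/

/-- Translation `|A|` of a HOL type as a Dedukti term; `ρ` gives the Dedukti
de Bruijn index of each HOL type variable. -/
def transTy (ρ : ℕ → ℕ) : HTy → DTm
  | .tvar j => .var (ρ j)
  | .bool => dBool
  | .ind => dInd
  | .arr A B => tArr (transTy ρ A) (transTy ρ B)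

/-- Lift a variable renaming under one binder. -/
def liftVar (ρ : ℕ → ℕ) : ℕ → ℕ
  | 0 => 0
  | n+1 => ρ n + 1

/-- Translation `|M|` of a HOL term as a Dedukti term; `ρT`, `ρt` give the
Dedukti de Bruijn indices of the free HOL type resp. term variables. -/
def transTm (ρT ρt : ℕ → ℕ) : HTm → DTm
  | .var i => .var (ρt i)
  | .lam A M => .lam (tTerm (transTy ρT A)) (transTm (fun j => ρT j + 1) (liftVar ρt) M)
  | .app M N => .app (transTm ρT ρt M) (transTm ρT ρt N)
  | .eq A => .app (.const 5) (transTy ρT A)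
  | .select A => .app (.const 6) (transTy ρT A)

/-- The Dedukti context `x₁ : ‖A₁‖, …, xₖ : ‖Aₖ‖` translating a HOL
term-variable context (to be placed in front of the `n` type variables). -/
def dTermCtx : List HTy → List DTm
  | [] => []
  | A :: D => tTerm (transTy (fun j => D.length + j) A) :: dTermCtx D

/-- The Dedukti context `‖Γ‖ = h₁ : ‖φ₁‖, …` translating HOL hypotheses;
`k` is the number of HOL term variables in scope. -/
def hypCtx (k : ℕ) : List HTm → List DTm
  | [] => []
  | φ :: rest =>
      tProof (transTm (fun j => rest.length + k + j) (fun i => rest.length + i) φ) ::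
        hypCtx k rest

def mkApps (f : DTm) (args : List DTm) : DTm := args.foldl .app f

def mkTyLams : ℕ → DTm → DTm
  | 0, M => M
  | n+1, M => .lam cTy (mkTyLams n M)

/-- `λx₁ : ‖B₁‖. … λxₖ : ‖Bₖ‖. M` (the head of the list is the innermost binder). -/
def bindTerms (ρT : ℕ → ℕ) : List HTy → DTm → DTm
  | [], M => M
  | A :: D, M => bindTerms ρT D (.lam (tTerm (transTy (fun j => ρT j + D.length) A)) M)

/-- Translation `|𝒟|` of a HOL derivation as a Dedukti proof term; `ρT`, `ρt`
give the Dedukti indices of free HOL type/term variables, and `ρh` gives the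
index of the hypothesis variable `h_φ` for each hypothesis `φ`. -/
def transDeriv : {D : List HTy} → {G : Finset HTm} → {φ : HTm} →
    (ρT ρt : ℕ → ℕ) → (ρh : HTm → ℕ) → HDeriv D G φ → DTm
  | _, _, _, ρT, ρt, _, .refl A M _ =>
      .app (.app dRefl (transTy ρT A)) (transTm ρT ρt M)
  | _, _, _, ρT, ρt, ρh, .absThm A B M N d =>
      .app (.app (.app (.app (.app dFunExt (transTy ρT A)) (transTy ρT B))
          (transTm ρT ρt (.lam A M))) (transTm ρT ρt (.lam A N)))
        (.lam (tTerm (transTy ρT A))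
          (transDeriv (fun j => ρT j + 1) (liftVar ρt)
            (fun χ => ρh (HTm.substF (fun i => .var (i - 1)) χ) + 1) d))
  | _, _, _, ρT, ρt, ρh, .appThm A B F Gt M N d1 d2 =>
      mkApps dAppThm [transTy ρT A, transTy ρT B, transTm ρT ρt F, transTm ρT ρt Gt,
        transTm ρT ρt M, transTm ρT ρt N,
        transDeriv ρT ρt ρh d1, transDeriv ρT ρt ρh d2]
  | _, _, _, ρT, ρt, _, .beta _ B M _ =>
      .app (.app dRefl (transTy ρT B)) (transTm ρT ρt M)
  | _, _, _, _, _, ρh, .assume φ _ => .var (ρh φ)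
  | _, _, _, ρT, ρt, ρh, .eqMp φ ψ d1 d2 =>
      mkApps dEqMp [transTm ρT ρt φ, transTm ρT ρt ψ,
        transDeriv ρT ρt ρh d1, transDeriv ρT ρt ρh d2]
  | _, _, _, ρT, ρt, ρh, .deductAntiSym φ ψ d1 d2 =>
      mkApps dPropExt [transTm ρT ρt φ, transTm ρT ρt ψ,
        .lam (tProof (transTm ρT ρt ψ))
          (transDeriv (fun j => ρT j + 1) (fun i => ρt i + 1)
            (fun χ => if χ = ψ then 0 else ρh χ + 1) d1),
        .lam (tProof (transTm ρT ρt φ))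
          (transDeriv (fun j => ρT j + 1) (fun i => ρt i + 1)
            (fun χ => if χ = φ then 0 else ρh χ + 1) d2)]
  | _, _, _, ρT, ρt, ρh, .typeSubst θ d =>
      mkApps
        (mkTyLams θ.length
          (transDeriv (fun j => if j < θ.length then j else ρT j + θ.length)
            (fun i => ρt i + θ.length)
            (fun χ => ρh (HTm.tsub θ χ) + θ.length) d))
        (θ.reverse.map (transTy ρT))
  | _, _, _, ρT, ρt, ρh, @HDeriv.termSubst D₀ _ _ _ σ _ _ d =>
      mkApps
        (bindTerms ρT D₀
          (transDeriv (fun j => ρT j + D₀.length)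
            (fun i => if i < D₀.length then i else ρt (i - D₀.length) + D₀.length)
            (fun χ => ρh (HTm.substL σ χ) + D₀.length) d))
        (σ.reverse.map (transTm ρT ρt))

/-- All free type variables appearing in a HOL derivation are `< n`. -/
def HDeriv.tvLt (n : ℕ) : {D : List HTy} → {G : Finset HTm} → {φ : HTm} →
    HDeriv D G φ → Prop
  | _, _, _, .refl A M _ => A.tvLt n ∧ M.tvLt n
  | _, _, _, .absThm A B M N d =>
      A.tvLt n ∧ B.tvLt n ∧ M.tvLt n ∧ N.tvLt n ∧ HDeriv.tvLt n d
  | _, _, _, .appThm A B F Gt M N d1 d2 =>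
      A.tvLt n ∧ B.tvLt n ∧ F.tvLt n ∧ Gt.tvLt n ∧ M.tvLt n ∧ N.tvLt n ∧
        HDeriv.tvLt n d1 ∧ HDeriv.tvLt n d2
  | _, _, _, .beta A B M _ => A.tvLt n ∧ B.tvLt n ∧ M.tvLt n
  | _, _, _, .assume φ _ => φ.tvLt n
  | _, _, _, .eqMp φ ψ d1 d2 => φ.tvLt n ∧ ψ.tvLt n ∧ HDeriv.tvLt n d1 ∧ HDeriv.tvLt n d2
  | _, _, _, .deductAntiSym φ ψ d1 d2 =>
      φ.tvLt n ∧ ψ.tvLt n ∧ HDeriv.tvLt n d1 ∧ HDeriv.tvLt n d2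
  | _, _, _, .typeSubst θ d => (∀ A ∈ θ, A.tvLt n) ∧ HDeriv.tvLt (max θ.length n) d
  | _, _, _, .termSubst σ _ _ d => (∀ t ∈ σ, t.tvLt n) ∧ HDeriv.tvLt n d


namespace DTm

theorem shift_shift_le (t : DTm) : ∀ (c c' : ℕ) (d d' : ℕ), c' ≤ c →
    shift d (c + d') (shift d' c' t) = shift d' c' (shift d c t) := by
  induction t with
  | var n =>
    intro c c' d d' h
    simp only [shift]
    by_cases h1 : n < c'
    · rw [if_pos h1]; simp only [shift]
      rw [if_pos (by omega : n < c + d'), if_pos (by omega : n < c)]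
      simp only [shift]; rw [if_pos h1]
    · rw [if_neg h1]; simp only [shift]
      by_cases h2 : n < c
      · rw [if_pos (by omega : n + d' < c + d'), if_pos h2]
        simp only [shift]; rw [if_neg h1]
      · rw [if_neg (by omega : ¬ n + d' < c + d'), if_neg h2]
        simp only [shift]; rw [if_neg (by omega : ¬ n + d < c')]
        congr 1; omega
  | const k => intros; rfl
  | type => intros; rfl
  | kind => intros; rfl
  | pi A B ihA ihB =>
    intro c c' d d' h
    simp only [shift]
    rw [ihA c c' d d' h]
    have := ihB (c+1) (c'+1) d d' (by omega)
    rw [show c + d' + 1 = c + 1 + d' by omega, this]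
  | lam A M ihA ihM =>
    intro c c' d d' h
    simp only [shift]
    rw [ihA c c' d d' h]
    have := ihM (c+1) (c'+1) d d' (by omega)
    rw [show c + d' + 1 = c + 1 + d' by omega, this]
  | app M N ihM ihN =>
    intro c c' d d' h
    simp only [shift, ihM c c' d d' h, ihN c c' d d' h]

theorem subst_shift (t : DTm) : ∀ (c d : ℕ) (σ : ℕ → DTm),
    subst σ (shift d c t) = subst (fun n => if n < c then σ n else σ (n + d)) t := by
  induction t with
  | var n =>
    intro c d σ
    simp only [shift]
    split
    · simp only [subst]; rw [if_pos ‹_›]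
    · simp only [subst]; rw [if_neg (by omega)]
  | const k => intros; rfl
  | type => intros; rfl
  | kind => intros; rfl
  | pi A B ihA ihB =>
    intro c d σ
    simp only [shift, subst, ihA, ihB]
    congr 1
    apply congrArg (fun σ => subst σ B)
    funext n
    match n with
    | 0 => simp [liftSub]
    | n+1 =>
      rw [show n+1+d = (n+d)+1 by omega]
      simp only [liftSub, apply_ite (shift 1 0)]
      split <;> split <;> first | rfl | (exfalso; omega)
  | lam A M ihA ihM =>
    intro c d σ
    simp only [shift, subst, ihA, ihM]
    congr 1
    apply congrArg (fun σ => subst σ M)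
    funext n
    match n with
    | 0 => simp [liftSub]
    | n+1 =>
      rw [show n+1+d = (n+d)+1 by omega]
      simp only [liftSub, apply_ite (shift 1 0)]
      split <;> split <;> first | rfl | (exfalso; omega)
  | app M N ihM ihN =>
    intro c d σ
    simp only [shift, subst, ihM, ihN]

theorem shift_subst (t : DTm) : ∀ (c d : ℕ) (σ : ℕ → DTm),
    shift d c (subst σ t) = subst (fun n => shift d c (σ n)) t := by
  induction t with
  | var n => intros; rfl
  | const k => intros; rfl
  | type => intros; rfl
  | kind => intros; rfl
  | pi A B ihA ihB =>
    intro c d σ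
    simp only [subst, shift, ihA, ihB]
    congr 1
    apply congrArg (fun σ => subst σ B)
    funext n
    match n with
    | 0 => simp [liftSub, shift]
    | n+1 =>
      simp only [liftSub]
      exact shift_shift_le (σ n) c 0 d 1 (Nat.zero_le c)
  | lam A M ihA ihM =>
    intro c d σ
    simp only [subst, shift, ihA, ihM]
    congr 1
    apply congrArg (fun σ => subst σ M)
    funext n
    match n with
    | 0 => simp [liftSub, shift]
    | n+1 =>
      simp only [liftSub]
      exact shift_shift_le (σ n) c 0 d 1 (Nat.zero_le c)
  | app M N ihM ihN =>
    intro c d σ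
    simp only [subst, shift, ihM, ihN]

/-- `subst (liftSub σ) (shift 1 0 t) = shift 1 0 (subst σ t)` -/
theorem subst_lift_shift (t : DTm) (σ : ℕ → DTm) :
    subst (liftSub σ) (shift 1 0 t) = shift 1 0 (subst σ t) := by
  rw [subst_shift, shift_subst]
  apply congrArg (fun σ => subst σ t)
  funext n
  simp [liftSub]

theorem subst_subst (t : DTm) : ∀ (σ τ : ℕ → DTm),
    subst σ (subst τ t) = subst (fun n => subst σ (τ n)) t := by
  induction t with
  | var n => intros; rfl
  | const k => intros; rfl
  | type => intros; rfl
  | kind => intros; rfl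
  | pi A B ihA ihB =>
    intro σ τ
    simp only [subst, ihA, ihB]
    congr 1
    apply congrArg (fun σ => subst σ B)
    funext n
    match n with
    | 0 => rfl
    | n+1 => simp only [liftSub]; exact subst_lift_shift (τ n) σ
  | lam A M ihA ihM =>
    intro σ τ
    simp only [subst, ihA, ihM]
    congr 1
    apply congrArg (fun σ => subst σ M)
    funext n
    match n with
    | 0 => rfl
    | n+1 => simp only [liftSub]; exact subst_lift_shift (τ n) σ
  | app M N ihM ihN =>
    intro σ τ
    simp only [subst, ihM, ihN]

theorem subst_id (t : DTm) : ∀ (σ : ℕ → DTm), (∀ n, σ n = var n) → subst σ t = t := by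
  induction t with
  | var n => intro σ h; exact h n
  | const k => intros; rfl
  | type => intros; rfl
  | kind => intros; rfl
  | pi A B ihA ihB =>
    intro σ h
    simp only [subst]
    rw [ihA σ h, ihB _ ?_]
    intro n
    match n with
    | 0 => rfl
    | n+1 => simp [liftSub, h n, shift]
  | lam A M ihA ihM =>
    intro σ h
    simp only [subst]
    rw [ihA σ h, ihM _ ?_]
    intro n
    match n with
    | 0 => rfl
    | n+1 => simp [liftSub, h n, shift]
  | app M N ihM ihN =>
    intro σ h
    simp only [subst, ihM σ h, ihN σ h]

/-- E1 -/
theorem shift_subst0 (M N : DTm) (d c : ℕ) :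
    shift d c (M.subst0 N) = (shift d (c+1) M).subst0 (shift d c N) := by
  unfold subst0
  rw [shift_subst, subst_shift]
  apply congrArg (fun σ => subst σ M)
  funext n
  match n with
  | 0 => simp
  | n+1 =>
    simp only [shift]
    rw [show n+1+d = (n+d)+1 by omega]
    split <;> split <;> first | rfl | (exfalso; omega)

/-- E3 -/
theorem subst_subst0 (M N : DTm) (σ : ℕ → DTm) :
    subst σ (M.subst0 N) = (subst (liftSub σ) M).subst0 (subst σ N) := by
  unfold subst0
  rw [subst_subst, subst_subst]
  apply congrArg (fun σ => subst σ M)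
  funext n
  match n with
  | 0 => rfl
  | n+1 =>
    show σ n = subst _ (liftSub σ (n+1))
    simp only [liftSub]
    rw [subst_shift]
    exact (subst_id (σ n) _ (fun m => by simp)).symm

end DTm

open DTm in
/-- Parallel reduction (Tait–Martin-Löf style), including the arrow rewrite rule. -/
inductive Par : DTm → DTm → Prop
  | var (n) : Par (.var n) (.var n)
  | const (k) : Par (.const k) (.const k)
  | type : Par .type .type
  | kind : Par .kind .kind
  | pi {A A' B B'} : Par A A' → Par B B' → Par (.pi A B) (.pi A' B')
  | lam {A A' M M'} : Par A A' → Par M M' → Par (.lam A M) (.lam A' M')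
  | app {M M' N N'} : Par M M' → Par N N' → Par (.app M N) (.app M' N')
  | beta {M M' N N'} (A) : Par M M' → Par N N' → Par (.app (.lam A M) N) (M'.subst0 N')
  | rew {a a' b b'} : Par a a' → Par b b' →
      Par (.app (.const 4) (.app (.app (.const 3) a) b))
          (.pi (.app (.const 4) a') (.app (.const 4) (DTm.shift 1 0 b')))

namespace Par
open DTm

theorem rfl' : ∀ M, Par M M := by
  intro M
  induction M with
  | var n => exact .var n
  | const k => exact .const k
  | type => exact .type
  | kind => exact .kind
  | pi A B ihA ihB => exact .pi ihA ihB
  | lam A M ihA ihM => exact .lam ihA ihM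
  | app M N ihM ihN => exact .app ihM ihN

theorem shiftPar : ∀ {M M'}, Par M M' → ∀ (c d : ℕ), Par (shift d c M) (shift d c M') := by
  intro M M' h
  induction h with
  | var n => intro c d; exact rfl' _
  | const k => intro c d; exact rfl' _
  | type => intro c d; exact .type
  | kind => intro c d; exact .kind
  | pi hA hB ihA ihB => intro c d; exact .pi (ihA c d) (ihB (c+1) d)
  | lam hA hM ihA ihM => intro c d; exact .lam (ihA c d) (ihM (c+1) d)
  | app hM hN ihM ihN => intro c d; exact .app (ihM c d) (ihN c d)
  | @beta M M' N N' A hM hN ihM ihN =>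
    intro c d
    rw [shift_subst0]
    exact .beta (shift d c A) (ihM (c+1) d) (ihN c d)
  | @rew a a' b b' ha hb iha ihb =>
    intro c d
    show Par (.app (.const 4) (.app (.app (.const 3) (shift d c a)) (shift d c b)))
      (.pi (.app (.const 4) (shift d c a')) (.app (.const 4) (shift d (c+1) (shift 1 0 b'))))
    rw [shift_shift_le b' c 0 d 1 (Nat.zero_le c)]
    exact .rew (iha c d) (ihb c d)

theorem liftSubPar {σ σ' : ℕ → DTm} (h : ∀ n, Par (σ n) (σ' n)) :
    ∀ n, Par (liftSub σ n) (liftSub σ' n)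
  | 0 => rfl' _
  | n+1 => (h n).shiftPar 0 1

theorem substPar : ∀ {M M'}, Par M M' → ∀ (σ σ' : ℕ → DTm),
    (∀ n, Par (σ n) (σ' n)) → Par (subst σ M) (subst σ' M') := by
  intro M M' h
  induction h with
  | var n => intro σ σ' hσ; exact hσ n
  | const k => intro σ σ' hσ; exact .const k
  | type => intro σ σ' hσ; exact .type
  | kind => intro σ σ' hσ; exact .kind
  | pi hA hB ihA ihB =>
    intro σ σ' hσ
    exact .pi (ihA σ σ' hσ) (ihB _ _ (liftSubPar hσ))
  | lam hA hM ihA ihM =>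
    intro σ σ' hσ
    exact .lam (ihA σ σ' hσ) (ihM _ _ (liftSubPar hσ))
  | app hM hN ihM ihN =>
    intro σ σ' hσ
    exact .app (ihM σ σ' hσ) (ihN σ σ' hσ)
  | @beta M M' N N' A hM hN ihM ihN =>
    intro σ σ' hσ
    show Par (.app (.lam (subst σ A) (subst (liftSub σ) M)) (subst σ N)) (subst σ' (M'.subst0 N'))
    rw [subst_subst0]
    exact .beta _ (ihM _ _ (liftSubPar hσ)) (ihN σ σ' hσ)
  | @rew a a' b b' ha hb iha ihb =>
    intro σ σ' hσ
    show Par (.app (.const 4) (.app (.app (.const 3) (subst σ a)) (subst σ b)))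
      (.pi (.app (.const 4) (subst σ' a'))
        (.app (.const 4) (subst (liftSub σ') (shift 1 0 b'))))
    rw [subst_lift_shift]
    exact .rew (iha σ σ' hσ) (ihb σ σ' hσ)

end Par

open DTm in
/-- The complete development. -/
def cd : DTm → DTm
  | .var n => .var n
  | .const k => .const k
  | .type => .type
  | .kind => .kind
  | .pi A B => .pi (cd A) (cd B)
  | .lam A M => .lam (cd A) (cd M)
  | .app (.lam _ M) N => (cd M).subst0 (cd N)
  | .app (.const 4) (.app (.app (.const 3) a) b) =>
      .pi (.app (.const 4) (cd a)) (.app (.const 4) (DTm.shift 1 0 (cd b)))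
  | .app M N => .app (cd M) (cd N)

theorem cd_pi (A B : DTm) : cd (.pi A B) = .pi (cd A) (cd B) := by simp [cd]
theorem cd_lam (A M : DTm) : cd (.lam A M) = .lam (cd A) (cd M) := by simp [cd]
theorem cd_beta (A M N : DTm) : cd (.app (.lam A M) N) = (cd M).subst0 (cd N) := by simp [cd]
theorem cd_rew (a b : DTm) :
    cd (.app (.const 4) (.app (.app (.const 3) a) b)) =
      .pi (.app (.const 4) (cd a)) (.app (.const 4) (DTm.shift 1 0 (cd b))) := by simp [cd]

theorem cd_app_default (M1 M2 : DTm) (h1 : ∀ A M, M1 ≠ .lam A M)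
    (h2 : ¬ (M1 = .const 4 ∧ ∃ a b, M2 = .app (.app (.const 3) a) b)) :
    cd (.app M1 M2) = .app (cd M1) (cd M2) := by
  rw [cd.eq_def]
  split
  all_goals rename_i heq
  all_goals cases heq
  · exact absurd rfl (h1 _ _)
  · exact absurd ⟨rfl, _, _, rfl⟩ h2
  · rfl

theorem Par.triangle : ∀ {M N}, Par M N → Par N (cd M) := by
  intro M N h
  induction h with
  | var n => exact Par.rfl' _
  | const k => exact Par.rfl' _
  | type => exact Par.type
  | kind => exact Par.kind
  | pi hA hB ihA ihB => rw [cd_pi]; exact Par.pi ihA ihB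
  | lam hA hM ihA ihM => rw [cd_lam]; exact Par.lam ihA ihM
  | @beta M M' N N' A hM hN ihM ihN =>
    rw [cd_beta]
    exact Par.substPar ihM _ _ (fun n => by
      cases n with
      | zero => exact ihN
      | succ n => exact Par.rfl' _)
  | @rew a a' b b' ha hb iha ihb =>
    rw [cd_rew]
    exact Par.pi (Par.app (Par.const 4) iha) (Par.app (Par.const 4) (ihb.shiftPar 0 1))
  | @app M1 N1 M2 N2 hM hN ihM ihN =>
    by_cases hlam : ∃ A M0, M1 = DTm.lam A M0
    · obtain ⟨A, M0, rfl⟩ := hlam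
      cases hM with
      | lam hA hM0 =>
        rw [cd_lam] at ihM
        cases ihM with
        | lam ihA ihM0 =>
          rw [cd_beta]
          exact Par.beta _ ihM0 ihN
    · by_cases hrew : M1 = DTm.const 4 ∧ ∃ a b, M2 = DTm.app (DTm.app (DTm.const 3) a) b
      · obtain ⟨rfl, a, b, rfl⟩ := hrew
        cases hM
        cases hN with
        | app hX hb =>
          cases hX with
          | app hc3 ha =>
            cases hc3
            rw [cd_app_default _ _ (by intro _ _ h; cases h)
              (by rintro ⟨h, -⟩; cases h),
              cd_app_default _ _ (by intro _ _ h; cases h)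
              (by rintro ⟨h, -⟩; cases h)] at ihN
            cases ihN with
            | app ihX ihb =>
              cases ihX with
              | app _ iha =>
                rw [cd_rew]
                exact Par.rew iha ihb
      · rw [cd_app_default M1 M2 (fun A M0 h => hlam ⟨A, M0, h⟩) hrew]
        exact Par.app ihM ihN

theorem Par.diamond {M N P : DTm} (h1 : Par M N) (h2 : Par M P) :
    ∃ Q, Par N Q ∧ Par P Q :=
  ⟨cd M, h1.triangle, h2.triangle⟩

theorem holSig_hasRule : holSig.hasRule arrowRuleCtx arrowRuleL arrowRuleR := by
  simp [holSig, baseSig, Sig.hasRule]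

theorem holSig_hasRule_inv {G : List DTm} {L R : DTm} (h : holSig.hasRule G L R) :
    G = arrowRuleCtx ∧ L = arrowRuleL ∧ R = arrowRuleR := by
  simpa [holSig, baseSig, Sig.hasRule] using h

open DTm in
theorem subst_arrowRuleL (σ : ℕ → DTm) :
    arrowRuleL.subst σ = .app (.const 4) (.app (.app (.const 3) (σ 1)) (σ 0)) := rfl

open DTm in
theorem subst_arrowRuleR (σ : ℕ → DTm) :
    arrowRuleR.subst σ = .pi (.app (.const 4) (σ 1)) (.app (.const 4) (shift 1 0 (σ 0))) := rfl

theorem Red.toPar : ∀ {M N : DTm}, Red holSig M N → Par M N := by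
  intro M N h
  induction h with
  | beta A M N => exact Par.beta A (Par.rfl' M) (Par.rfl' N)
  | @rew G L R σ hrule =>
    obtain ⟨rfl, rfl, rfl⟩ := holSig_hasRule_inv hrule
    rw [subst_arrowRuleL, subst_arrowRuleR]
    exact Par.rew (Par.rfl' _) (Par.rfl' _)
  | appL N _ ih => exact Par.app ih (Par.rfl' N)
  | appR M _ ih => exact Par.app (Par.rfl' M) ih
  | lamTy M _ ih => exact Par.lam ih (Par.rfl' M)
  | lamBody A _ ih => exact Par.lam (Par.rfl' A) ih
  | piL B _ ih => exact Par.pi ih (Par.rfl' B)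
  | piR A _ ih => exact Par.pi (Par.rfl' A) ih

abbrev RS := Relation.ReflTransGen (Red holSig)

theorem RS.app {M M' N N' : DTm} (h1 : RS M M') (h2 : RS N N') :
    RS (.app M N) (.app M' N') :=
  Relation.ReflTransGen.trans
    (Relation.ReflTransGen.lift (fun X => DTm.app X N) (fun a b h => Red.appL N h) _ _ h1)
    (Relation.ReflTransGen.lift (fun X => DTm.app M' X) (fun a b h => Red.appR M' h) _ _ h2)

theorem RS.lam {A A' M M' : DTm} (h1 : RS A A') (h2 : RS M M') :
    RS (.lam A M) (.lam A' M') :=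
  Relation.ReflTransGen.trans
    (Relation.ReflTransGen.lift (fun X => DTm.lam X M) (fun a b h => Red.lamTy M h) _ _ h1)
    (Relation.ReflTransGen.lift (fun X => DTm.lam A' X) (fun a b h => Red.lamBody A' h) _ _ h2)

theorem RS.pi {A A' B B' : DTm} (h1 : RS A A') (h2 : RS B B') :
    RS (.pi A B) (.pi A' B') :=
  Relation.ReflTransGen.trans
    (Relation.ReflTransGen.lift (fun X => DTm.pi X B) (fun a b h => Red.piL B h) _ _ h1)
    (Relation.ReflTransGen.lift (fun X => DTm.pi A' X) (fun a b h => Red.piR A' h) _ _ h2)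

open DTm in
theorem red_rew_step (a b : DTm) :
    Red holSig (.app (.const 4) (.app (.app (.const 3) a) b))
      (.pi (.app (.const 4) a) (.app (.const 4) (shift 1 0 b))) := by
  have h := Red.rew (S := holSig)
    (σ := fun n => match n with | 0 => b | 1 => a | n+2 => DTm.var n) holSig_hasRule
  rwa [subst_arrowRuleL, subst_arrowRuleR] at h

theorem Par.toRS : ∀ {M N : DTm}, Par M N → RS M N := by
  intro M N h
  induction h with
  | var n => exact .refl
  | const k => exact .refl
  | type => exact .refl
  | kind => exact .refl
  | pi _ _ ihA ihB => exact RS.pi ihA ihB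
  | lam _ _ ihA ihM => exact RS.lam ihA ihM
  | app _ _ ihM ihN => exact RS.app ihM ihN
  | @beta M M' N N' A _ _ ihM ihN =>
    exact Relation.ReflTransGen.tail
      (RS.app (RS.lam Relation.ReflTransGen.refl ihM) ihN) (Red.beta A M' N')
  | @rew a a' b b' _ _ iha ihb =>
    exact Relation.ReflTransGen.tail
      (RS.app Relation.ReflTransGen.refl
        (RS.app (RS.app Relation.ReflTransGen.refl iha) ihb))
      (red_rew_step a' b')

theorem parStar_toRS {M N : DTm} (h : Relation.ReflTransGen Par M N) : RS M N := by
  induction h with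
  | refl => exact .refl
  | tail _ hstep ih => exact ih.trans hstep.toRS


/-- **Lemma 4 (paper §5).** The reduction relation `→βΣ` of the HOL signature
`Σ` is confluent. -/
theorem confluence (M N P : DTm)
    (hMN : Relation.ReflTransGen (Red holSig) M N)
    (hMP : Relation.ReflTransGen (Red holSig) M P) :
    ∃ Q, Relation.ReflTransGen (Red holSig) N Q ∧
      Relation.ReflTransGen (Red holSig) P Q := by
  have hN : Relation.ReflTransGen Par M N :=
    Relation.ReflTransGen.mono (fun a b h => Red.toPar h) _ _ hMN
  have hP : Relation.ReflTransGen Par M P :=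
    Relation.ReflTransGen.mono (fun a b h => Red.toPar h) _ _ hMP
  obtain ⟨Q, hNQ, hPQ⟩ := Relation.church_rosser
    (fun a b c hab hac => by
      obtain ⟨d, h1, h2⟩ := Par.diamond hab hac
      exact ⟨d, Relation.ReflGen.single h1, Relation.ReflTransGen.single h2⟩)
    hN hP
  exact ⟨Q, parStar_toRS hNQ, parStar_toRS hPQ⟩

end HolDk
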